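/- Under the setting of the previous statement with d(ω) = E(φ_ω) − ωQ(φ_ω) and S_ω = E − ωQ, one has d'''(ω) = ⟨S_ω'''(φ_ω)(φ_ω', φ_ω'), φ_ω'⟩ − 3‖φ_ω'‖_H². -/

import Mathlib

open scoped RealInnerProductSpace

theorem stmt_17 {X H : Type*}
    [NormedAddCommGroup X] [InnerProductSpace ℝ X] [CompleteSpace X]
    [NormedAddCommGroup H] [InnerProductSpace ℝ H] [CompleteSpace H]
    (ι : X →L[ℝ] H)
    (Ω : Set ℝ) (hΩ : IsOpen Ω)
    (E : X → ℝ) (hE : ContDiff ℝ 3 E)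
    (Q : X → ℝ) (hQ : ∀ u, Q u = (1/2) * ‖ι u‖^2)
    (φ φ' φ'' : ℝ → X)
    (hφ' : ∀ ω ∈ Ω, HasDerivAt φ (φ' ω) ω)
    (hφ'' : ∀ ω ∈ Ω, HasDerivAt φ' (φ'' ω) ω)
    (hstat : ∀ ω ∈ Ω, fderiv ℝ E (φ ω) = ω • fderiv ℝ Q (φ ω))
    (d : ℝ → ℝ) (hd : ∀ ω, d ω = E (φ ω) - ω * Q (φ ω))
    (hd' : ∀ ω ∈ Ω, HasDerivAt d (-(Q (φ ω))) ω)
    (hd'' : ∀ ω ∈ Ω, HasDerivAt (fun w => -(Q (φ w))) (-⟪ι (φ ω), ι (φ' ω)⟫) ω) :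
    ∀ ω ∈ Ω, HasDerivAt (fun w => -⟪ι (φ w), ι (φ' w)⟫)
      (fderiv ℝ (fderiv ℝ (fderiv ℝ E)) (φ ω) (φ' ω) (φ' ω) (φ' ω) - 3 * ‖ι (φ' ω)‖^2) ω := by
  have hEd : Differentiable ℝ E := hE.differentiable (by norm_num)
  have hE1 : ContDiff ℝ 2 (fderiv ℝ E) := hE.fderiv_right (by norm_num)
  have hE2 : ContDiff ℝ 1 (fderiv ℝ (fderiv ℝ E)) := hE1.fderiv_right (by norm_num)
  -- fderiv of Q
  have hQd : ∀ u : X, HasFDerivAt Q ((innerSL ℝ (ι u)).comp ι) u := by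
    intro u
    have h1 : HasFDerivAt (fun u : X => ι u) (ι : X →L[ℝ] H) u := ι.hasFDerivAt
    have h2 := (h1.inner ℝ h1).const_mul (1/2 : ℝ)
    have heq : Q = fun u : X => (1/2 : ℝ) * ⟪ι u, ι u⟫ := by
      funext u; rw [hQ u, real_inner_self_eq_norm_sq]
    rw [heq]
    refine h2.congr_fderiv ?_
    ext v
    simp [fderivInnerCLM_apply, real_inner_comm]
    ring
  -- scalar form of the stationary equation
  have eq1 : ∀ w ∈ Ω, ∀ v : X, fderiv ℝ E (φ w) v = w * ⟪ι (φ w), ι v⟫ := by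
    intro w hw v
    rw [hstat w hw, (hQd (φ w)).fderiv]
    simp [smul_eq_mul]
  -- differentiate the stationary equation once
  have eq2 : ∀ w ∈ Ω, ∀ v : X,
      fderiv ℝ (fderiv ℝ E) (φ w) (φ' w) v = ⟪ι (φ w), ι v⟫ + w * ⟪ι (φ' w), ι v⟫ := by
    intro w hw v
    have hc : HasDerivAt (fun t => fderiv ℝ E (φ t))
        (fderiv ℝ (fderiv ℝ E) (φ w) (φ' w)) w :=
      ((hE1.differentiable (by norm_num) (φ w)).hasFDerivAt).comp_hasDerivAt w (hφ' w hw)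
    have hL := hc.clm_apply (hasDerivAt_const w v)
    simp only [map_zero, add_zero] at hL
    have hiφ : HasDerivAt (fun t => ι (φ t)) (ι (φ' w)) w :=
      ι.hasFDerivAt.comp_hasDerivAt w (hφ' w hw)
    have hin := hiφ.inner ℝ (hasDerivAt_const w (ι v))
    have hR := (hasDerivAt_id w).mul hin
    have hev : (fun t => fderiv ℝ E (φ t) v) =ᶠ[nhds w]
        (fun t => t * ⟪ι (φ t), ι v⟫) := by
      filter_upwards [hΩ.mem_nhds hw] with t ht
      exact eq1 t ht v
    have := (hL.congr_of_eventuallyEq hev.symm).unique hR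
    rw [this]
    simp
  intro ω hω
  have hiφ : HasDerivAt (fun t => ι (φ t)) (ι (φ' ω)) ω :=
    ι.hasFDerivAt.comp_hasDerivAt ω (hφ' ω hω)
  have hiφ' : HasDerivAt (fun t => ι (φ' t)) (ι (φ'' ω)) ω :=
    ι.hasFDerivAt.comp_hasDerivAt ω (hφ'' ω hω)
  -- differentiate once more, testing against the fixed vector φ' ω
  have eq3 : fderiv ℝ (fderiv ℝ (fderiv ℝ E)) (φ ω) (φ' ω) (φ' ω) (φ' ω)
      + fderiv ℝ (fderiv ℝ E) (φ ω) (φ'' ω) (φ' ω)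
      = 2 * ⟪ι (φ' ω), ι (φ' ω)⟫ + ω * ⟪ι (φ'' ω), ι (φ' ω)⟫ := by
    have hc2 : HasDerivAt (fun t => fderiv ℝ (fderiv ℝ E) (φ t))
        (fderiv ℝ (fderiv ℝ (fderiv ℝ E)) (φ ω) (φ' ω)) ω :=
      ((hE2.differentiable (by norm_num) (φ ω)).hasFDerivAt).comp_hasDerivAt ω (hφ' ω hω)
    have hc3 := hc2.clm_apply (hφ'' ω hω)
    have hL := hc3.clm_apply (hasDerivAt_const ω (φ' ω))
    simp only [map_zero, add_zero, ContinuousLinearMap.add_apply] at hL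
    have hin1 := hiφ.inner ℝ (hasDerivAt_const ω (ι (φ' ω)))
    have hin2 := hiφ'.inner ℝ (hasDerivAt_const ω (ι (φ' ω)))
    have hR := hin1.add ((hasDerivAt_id ω).mul hin2)
    have hev : (fun t => fderiv ℝ (fderiv ℝ E) (φ t) (φ' t) (φ' ω)) =ᶠ[nhds ω]
        (fun t => ⟪ι (φ t), ι (φ' ω)⟫ + t * ⟪ι (φ' t), ι (φ' ω)⟫) := by
      filter_upwards [hΩ.mem_nhds hω] with t ht
      exact eq2 t ht (φ' ω)
    have := (hL.congr_of_eventuallyEq hev.symm).unique hR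
    rw [this]
    simp
    ring
  -- symmetry of the second derivative
  have hsym : fderiv ℝ (fderiv ℝ E) (φ ω) (φ'' ω) (φ' ω)
      = fderiv ℝ (fderiv ℝ E) (φ ω) (φ' ω) (φ'' ω) :=
    second_derivative_symmetric (fun y => (hEd y).hasFDerivAt)
      ((hE1.differentiable (by norm_num) (φ ω)).hasFDerivAt) _ _
  have eq4 := eq2 ω hω (φ'' ω)
  have key : ⟪ι (φ ω), ι (φ'' ω)⟫
      = 2 * ‖ι (φ' ω)‖^2 - fderiv ℝ (fderiv ℝ (fderiv ℝ E)) (φ ω) (φ' ω) (φ' ω) (φ' ω) := by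
    have hc : ⟪ι (φ'' ω), ι (φ' ω)⟫ = ⟪ι (φ' ω), ι (φ'' ω)⟫ := real_inner_comm _ _
    have hn : ⟪ι (φ' ω), ι (φ' ω)⟫ = ‖ι (φ' ω)‖^2 := real_inner_self_eq_norm_sq _
    rw [hsym, eq4] at eq3
    rw [hc, hn] at eq3
    linarith
  -- conclude
  have h := (hiφ.inner ℝ hiφ').neg
  have hval : -(⟪ι (φ ω), ι (φ'' ω)⟫ + ⟪ι (φ' ω), ι (φ' ω)⟫)
      = fderiv ℝ (fderiv ℝ (fderiv ℝ E)) (φ ω) (φ' ω) (φ' ω) (φ' ω) - 3 * ‖ι (φ' ω)‖^2 := by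
    rw [key, real_inner_self_eq_norm_sq]
    ring
  rw [← hval]
  exact h
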